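/- The Biggs–Smith graph admits no coherent 9-cycle orientation of level 4; that is, there is no choice, for each 9-cycle of the Biggs–Smith graph, of one of its two directions such that every path v_0, v_1, v_2, v_3 on 4 distinct vertices with consecutive vertices adjacent occurs as a consecutive segment of exactly one chosen directed 9-cycle. -/
import Mathlib


/-- A directed `g`-cycle of a simple graph `G`: an injective map `c : ZMod g → V`
with `c i` adjacent to `c (i+1)` for all `i`. -/
def IsDirCycleOn {V : Type*} (G : SimpleGraph V) (g : ℕ) (c : ZMod g → V) : Prop :=
  Function.Injective c ∧ ∀ i : ZMod g, G.Adj (c i) (c (i + 1))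

/-- A sequence of `k` distinct vertices with consecutive vertices adjacent. -/
def IsPathSeq {V : Type*} (G : SimpleGraph V) (k : ℕ) (v : Fin k → V) : Prop :=
  Function.Injective v ∧ ∀ (j : ℕ) (h : j + 1 < k),
    G.Adj (v ⟨j, Nat.lt_of_succ_lt h⟩) (v ⟨j + 1, h⟩)

/-- A coherent `g`-cycle orientation of level `k` of `G`: a set `D` of directed
`g`-cycles of `G` containing, for every `g`-cycle of `G`, exactly one of its two
directions (one representative up to rotation), and such that every sequence of `k`
distinct vertices `v 0, …, v (k-1)` with consecutive vertices adjacent occurs as a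
consecutive segment `(c i, c (i+1), …, c (i+k-1))` of exactly one `c ∈ D`. -/
def IsCoherentOrientation {V : Type*} (G : SimpleGraph V) (g k : ℕ)
    (D : Set (ZMod g → V)) : Prop :=
  (∀ c ∈ D, IsDirCycleOn G g c) ∧
  (∀ c : ZMod g → V, IsDirCycleOn G g c →
    ∃! c', c' ∈ D ∧
      ((∃ r : ZMod g, ∀ i, c' i = c (i + r)) ∨ (∃ r : ZMod g, ∀ i, c' i = c (r - i)))) ∧
  (∀ v : Fin k → V, IsPathSeq G k v →
    ∃! c, c ∈ D ∧ ∃ i : ZMod g, ∀ j : Fin k, c (i + ((j : ℕ) : ZMod g)) = v j)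

/-- The Biggs–Smith graph on vertex set `{A,B,C,D,E,F} × ZMod 17` (here `A,…,F` are
`0,…,5 : Fin 6`), with edges `A_i–A_{i+1}`, `C_i–C_{i+4}`, `D_i–D_{i+2}`,
`F_i–F_{i+8}`, `A_i–B_i`, `B_i–C_i`, `B_i–E_i`, `D_i–E_i`, `E_i–F_i`. -/
def biggsSmithGraph : SimpleGraph (Fin 6 × ZMod 17) :=
  SimpleGraph.fromRel (fun p q =>
    (p.1 = 0 ∧ q.1 = 0 ∧ q.2 = p.2 + 1) ∨
    (p.1 = 2 ∧ q.1 = 2 ∧ q.2 = p.2 + 4) ∨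
    (p.1 = 3 ∧ q.1 = 3 ∧ q.2 = p.2 + 2) ∨
    (p.1 = 5 ∧ q.1 = 5 ∧ q.2 = p.2 + 8) ∨
    (p.1 = 0 ∧ q.1 = 1 ∧ q.2 = p.2) ∨
    (p.1 = 1 ∧ q.1 = 2 ∧ q.2 = p.2) ∨
    (p.1 = 1 ∧ q.1 = 4 ∧ q.2 = p.2) ∨
    (p.1 = 3 ∧ q.1 = 4 ∧ q.2 = p.2) ∨
    (p.1 = 4 ∧ q.1 = 5 ∧ q.2 = p.2))


section BSAux

instance bsDecAdj : DecidableRel biggsSmithGraph.Adj := fun a b =>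
  inferInstanceAs (Decidable (a ≠ b ∧ _))

private def BSCov (c : ZMod 9 → Fin 6 × ZMod 17) (v : Fin 4 → Fin 6 × ZMod 17) : Prop :=
  ∃ i : ZMod 9, ∀ j : Fin 4, c (i + ((j : ℕ) : ZMod 9)) = v j

private lemma bsCovA {C c : ZMod 9 → Fin 6 × ZMod 17} {v : Fin 4 → Fin 6 × ZMod 17}
    {r i0 : ZMod 9} (h1 : ∀ i, c i = C (i + r))
    (h2 : ∀ j : Fin 4, C (i0 + ((j : ℕ) : ZMod 9)) = v j) : BSCov c v :=
  ⟨i0 - r, fun j => by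
    rw [h1, show i0 - r + ((j : ℕ) : ZMod 9) + r = i0 + ((j : ℕ) : ZMod 9) from by ring]
    exact h2 j⟩

private lemma bsCovB {C c : ZMod 9 → Fin 6 × ZMod 17} {v : Fin 4 → Fin 6 × ZMod 17}
    {r i1 : ZMod 9} (h1 : ∀ i, c i = C (r - i))
    (h2 : ∀ j : Fin 4, C (i1 - ((j : ℕ) : ZMod 9)) = v j) : BSCov c v :=
  ⟨r - i1, fun j => by
    rw [h1, show r - (r - i1 + ((j : ℕ) : ZMod 9)) = i1 - ((j : ℕ) : ZMod 9) from by ring]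
    exact h2 j⟩

private lemma bsNe {c c' C C' : ZMod 9 → Fin 6 × ZMod 17} {x : Fin 6 × ZMod 17}
    (h : (∃ r, ∀ i, c i = C (i + r)) ∨ (∃ r, ∀ i, c i = C (r - i)))
    (h' : (∃ r, ∀ i, c' i = C' (i + r)) ∨ (∃ r, ∀ i, c' i = C' (r - i)))
    (hx : ∃ j, C' j = x) (hnx : ∀ i, C i ≠ x) : c ≠ c' := by
  intro he
  obtain ⟨j, hj⟩ := hx
  have hx' : ∃ i, c' i = x := by
    rcases h' with ⟨r, hr⟩ | ⟨r, hr⟩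
    · exact ⟨j - r, by rw [hr, show j - r + r = j from by ring]; exact hj⟩
    · exact ⟨r - j, by rw [hr, show r - (r - j) = j from by ring]; exact hj⟩
  obtain ⟨i, hi⟩ := hx'
  rw [← he] at hi
  rcases h with ⟨r, hr⟩ | ⟨r, hr⟩
  · exact hnx _ ((hr i) ▸ hi)
  · exact hnx _ ((hr i) ▸ hi)

private def BSL0 : ZMod 9 → Fin 6 × ZMod 17 := fun i =>
  if i = 0 then ((0 : Fin 6), (0 : ZMod 17)) else if i = 1 then ((0 : Fin 6), (1 : ZMod 17)) else if i = 2 then ((1 : Fin 6), (1 : ZMod 17)) else if i = 3 then ((4 : Fin 6), (1 : ZMod 17)) else if i = 4 then ((3 : Fin 6), (1 : ZMod 17)) else if i = 5 then ((3 : Fin 6), (16 : ZMod 17)) else if i = 6 then ((4 : Fin 6), (16 : ZMod 17)) else if i = 7 then ((1 : Fin 6), (16 : ZMod 17)) else ((0 : Fin 6), (16 : ZMod 17))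

private def BSL1 : ZMod 9 → Fin 6 × ZMod 17 := fun i =>
  if i = 0 then ((0 : Fin 6), (0 : ZMod 17)) else if i = 1 then ((0 : Fin 6), (1 : ZMod 17)) else if i = 2 then ((1 : Fin 6), (1 : ZMod 17)) else if i = 3 then ((4 : Fin 6), (1 : ZMod 17)) else if i = 4 then ((5 : Fin 6), (1 : ZMod 17)) else if i = 5 then ((5 : Fin 6), (9 : ZMod 17)) else if i = 6 then ((5 : Fin 6), (0 : ZMod 17)) else if i = 7 then ((4 : Fin 6), (0 : ZMod 17)) else ((1 : Fin 6), (0 : ZMod 17))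

private def BSL2 : ZMod 9 → Fin 6 × ZMod 17 := fun i =>
  if i = 0 then ((0 : Fin 6), (1 : ZMod 17)) else if i = 1 then ((0 : Fin 6), (2 : ZMod 17)) else if i = 2 then ((1 : Fin 6), (2 : ZMod 17)) else if i = 3 then ((4 : Fin 6), (2 : ZMod 17)) else if i = 4 then ((5 : Fin 6), (2 : ZMod 17)) else if i = 5 then ((5 : Fin 6), (10 : ZMod 17)) else if i = 6 then ((5 : Fin 6), (1 : ZMod 17)) else if i = 7 then ((4 : Fin 6), (1 : ZMod 17)) else ((1 : Fin 6), (1 : ZMod 17))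

private def BSL3 : ZMod 9 → Fin 6 × ZMod 17 := fun i =>
  if i = 0 then ((1 : Fin 6), (1 : ZMod 17)) else if i = 1 then ((2 : Fin 6), (1 : ZMod 17)) else if i = 2 then ((2 : Fin 6), (14 : ZMod 17)) else if i = 3 then ((2 : Fin 6), (10 : ZMod 17)) else if i = 4 then ((1 : Fin 6), (10 : ZMod 17)) else if i = 5 then ((4 : Fin 6), (10 : ZMod 17)) else if i = 6 then ((5 : Fin 6), (10 : ZMod 17)) else if i = 7 then ((5 : Fin 6), (1 : ZMod 17)) else ((4 : Fin 6), (1 : ZMod 17))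

private def BSL4 : ZMod 9 → Fin 6 × ZMod 17 := fun i =>
  if i = 0 then ((1 : Fin 6), (1 : ZMod 17)) else if i = 1 then ((2 : Fin 6), (1 : ZMod 17)) else if i = 2 then ((2 : Fin 6), (14 : ZMod 17)) else if i = 3 then ((1 : Fin 6), (14 : ZMod 17)) else if i = 4 then ((4 : Fin 6), (14 : ZMod 17)) else if i = 5 then ((3 : Fin 6), (14 : ZMod 17)) else if i = 6 then ((3 : Fin 6), (16 : ZMod 17)) else if i = 7 then ((3 : Fin 6), (1 : ZMod 17)) else ((4 : Fin 6), (1 : ZMod 17))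

private def BSP0 : Fin 4 → Fin 6 × ZMod 17 := ![((0 : Fin 6), (0 : ZMod 17)), ((0 : Fin 6), (1 : ZMod 17)), ((1 : Fin 6), (1 : ZMod 17)), ((4 : Fin 6), (1 : ZMod 17))]

private def BSQ0 : Fin 4 → Fin 6 × ZMod 17 := ![((4 : Fin 6), (1 : ZMod 17)), ((1 : Fin 6), (1 : ZMod 17)), ((0 : Fin 6), (1 : ZMod 17)), ((0 : Fin 6), (0 : ZMod 17))]

private def BSP1 : Fin 4 → Fin 6 × ZMod 17 := ![((0 : Fin 6), (1 : ZMod 17)), ((1 : Fin 6), (1 : ZMod 17)), ((4 : Fin 6), (1 : ZMod 17)), ((5 : Fin 6), (1 : ZMod 17))]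

private def BSQ1 : Fin 4 → Fin 6 × ZMod 17 := ![((5 : Fin 6), (1 : ZMod 17)), ((4 : Fin 6), (1 : ZMod 17)), ((1 : Fin 6), (1 : ZMod 17)), ((0 : Fin 6), (1 : ZMod 17))]

private def BSP2 : Fin 4 → Fin 6 × ZMod 17 := ![((5 : Fin 6), (10 : ZMod 17)), ((5 : Fin 6), (1 : ZMod 17)), ((4 : Fin 6), (1 : ZMod 17)), ((1 : Fin 6), (1 : ZMod 17))]

private def BSQ2 : Fin 4 → Fin 6 × ZMod 17 := ![((1 : Fin 6), (1 : ZMod 17)), ((4 : Fin 6), (1 : ZMod 17)), ((5 : Fin 6), (1 : ZMod 17)), ((5 : Fin 6), (10 : ZMod 17))]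

private def BSP3 : Fin 4 → Fin 6 × ZMod 17 := ![((4 : Fin 6), (1 : ZMod 17)), ((1 : Fin 6), (1 : ZMod 17)), ((2 : Fin 6), (1 : ZMod 17)), ((2 : Fin 6), (14 : ZMod 17))]

private def BSQ3 : Fin 4 → Fin 6 × ZMod 17 := ![((2 : Fin 6), (14 : ZMod 17)), ((2 : Fin 6), (1 : ZMod 17)), ((1 : Fin 6), (1 : ZMod 17)), ((4 : Fin 6), (1 : ZMod 17))]

private def BSP4 : Fin 4 → Fin 6 × ZMod 17 := ![((1 : Fin 6), (1 : ZMod 17)), ((4 : Fin 6), (1 : ZMod 17)), ((3 : Fin 6), (1 : ZMod 17)), ((3 : Fin 6), (16 : ZMod 17))]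

private def BSQ4 : Fin 4 → Fin 6 × ZMod 17 := ![((3 : Fin 6), (16 : ZMod 17)), ((3 : Fin 6), (1 : ZMod 17)), ((4 : Fin 6), (1 : ZMod 17)), ((1 : Fin 6), (1 : ZMod 17))]

private lemma bsCyc0 : IsDirCycleOn biggsSmithGraph 9 BSL0 := by
  constructor
  · decide
  · decide

private lemma bsCyc1 : IsDirCycleOn biggsSmithGraph 9 BSL1 := by
  constructor
  · decide
  · decide

private lemma bsCyc2 : IsDirCycleOn biggsSmithGraph 9 BSL2 := by
  constructor
  · decide
  · decide

private lemma bsCyc3 : IsDirCycleOn biggsSmithGraph 9 BSL3 := by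
  constructor
  · decide
  · decide

private lemma bsCyc4 : IsDirCycleOn biggsSmithGraph 9 BSL4 := by
  constructor
  · decide
  · decide

private lemma bsSeqP0 : IsPathSeq biggsSmithGraph 4 BSP0 :=
  ⟨by decide, by
    intro j h
    have hj : j < 3 := Nat.lt_of_succ_lt_succ h
    interval_cases j
    · exact show biggsSmithGraph.Adj (BSP0 0) (BSP0 1) by decide
    · exact show biggsSmithGraph.Adj (BSP0 1) (BSP0 2) by decide
    · exact show biggsSmithGraph.Adj (BSP0 2) (BSP0 3) by decide⟩

private lemma bsSeqQ0 : IsPathSeq biggsSmithGraph 4 BSQ0 :=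
  ⟨by decide, by
    intro j h
    have hj : j < 3 := Nat.lt_of_succ_lt_succ h
    interval_cases j
    · exact show biggsSmithGraph.Adj (BSQ0 0) (BSQ0 1) by decide
    · exact show biggsSmithGraph.Adj (BSQ0 1) (BSQ0 2) by decide
    · exact show biggsSmithGraph.Adj (BSQ0 2) (BSQ0 3) by decide⟩

private lemma bsSeqP1 : IsPathSeq biggsSmithGraph 4 BSP1 :=
  ⟨by decide, by
    intro j h
    have hj : j < 3 := Nat.lt_of_succ_lt_succ h
    interval_cases j
    · exact show biggsSmithGraph.Adj (BSP1 0) (BSP1 1) by decide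
    · exact show biggsSmithGraph.Adj (BSP1 1) (BSP1 2) by decide
    · exact show biggsSmithGraph.Adj (BSP1 2) (BSP1 3) by decide⟩

private lemma bsSeqQ1 : IsPathSeq biggsSmithGraph 4 BSQ1 :=
  ⟨by decide, by
    intro j h
    have hj : j < 3 := Nat.lt_of_succ_lt_succ h
    interval_cases j
    · exact show biggsSmithGraph.Adj (BSQ1 0) (BSQ1 1) by decide
    · exact show biggsSmithGraph.Adj (BSQ1 1) (BSQ1 2) by decide
    · exact show biggsSmithGraph.Adj (BSQ1 2) (BSQ1 3) by decide⟩

private lemma bsSeqP2 : IsPathSeq biggsSmithGraph 4 BSP2 :=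
  ⟨by decide, by
    intro j h
    have hj : j < 3 := Nat.lt_of_succ_lt_succ h
    interval_cases j
    · exact show biggsSmithGraph.Adj (BSP2 0) (BSP2 1) by decide
    · exact show biggsSmithGraph.Adj (BSP2 1) (BSP2 2) by decide
    · exact show biggsSmithGraph.Adj (BSP2 2) (BSP2 3) by decide⟩

private lemma bsSeqQ2 : IsPathSeq biggsSmithGraph 4 BSQ2 :=
  ⟨by decide, by
    intro j h
    have hj : j < 3 := Nat.lt_of_succ_lt_succ h
    interval_cases j
    · exact show biggsSmithGraph.Adj (BSQ2 0) (BSQ2 1) by decide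
    · exact show biggsSmithGraph.Adj (BSQ2 1) (BSQ2 2) by decide
    · exact show biggsSmithGraph.Adj (BSQ2 2) (BSQ2 3) by decide⟩

private lemma bsSeqP3 : IsPathSeq biggsSmithGraph 4 BSP3 :=
  ⟨by decide, by
    intro j h
    have hj : j < 3 := Nat.lt_of_succ_lt_succ h
    interval_cases j
    · exact show biggsSmithGraph.Adj (BSP3 0) (BSP3 1) by decide
    · exact show biggsSmithGraph.Adj (BSP3 1) (BSP3 2) by decide
    · exact show biggsSmithGraph.Adj (BSP3 2) (BSP3 3) by decide⟩

private lemma bsSeqQ3 : IsPathSeq biggsSmithGraph 4 BSQ3 :=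
  ⟨by decide, by
    intro j h
    have hj : j < 3 := Nat.lt_of_succ_lt_succ h
    interval_cases j
    · exact show biggsSmithGraph.Adj (BSQ3 0) (BSQ3 1) by decide
    · exact show biggsSmithGraph.Adj (BSQ3 1) (BSQ3 2) by decide
    · exact show biggsSmithGraph.Adj (BSQ3 2) (BSQ3 3) by decide⟩

private lemma bsSeqP4 : IsPathSeq biggsSmithGraph 4 BSP4 :=
  ⟨by decide, by
    intro j h
    have hj : j < 3 := Nat.lt_of_succ_lt_succ h
    interval_cases j
    · exact show biggsSmithGraph.Adj (BSP4 0) (BSP4 1) by decide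
    · exact show biggsSmithGraph.Adj (BSP4 1) (BSP4 2) by decide
    · exact show biggsSmithGraph.Adj (BSP4 2) (BSP4 3) by decide⟩

private lemma bsSeqQ4 : IsPathSeq biggsSmithGraph 4 BSQ4 :=
  ⟨by decide, by
    intro j h
    have hj : j < 3 := Nat.lt_of_succ_lt_succ h
    interval_cases j
    · exact show biggsSmithGraph.Adj (BSQ4 0) (BSQ4 1) by decide
    · exact show biggsSmithGraph.Adj (BSQ4 1) (BSQ4 2) by decide
    · exact show biggsSmithGraph.Adj (BSQ4 2) (BSQ4 3) by decide⟩

private lemma bsF0_0 : ∀ j : Fin 4, BSL0 ((0 : ZMod 9) + ((j : ℕ) : ZMod 9)) = BSP0 j := by decide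

private lemma bsG0_0 : ∀ j : Fin 4, BSL0 ((3 : ZMod 9) - ((j : ℕ) : ZMod 9)) = BSQ0 j := by decide

private lemma bsF1_0 : ∀ j : Fin 4, BSL1 ((0 : ZMod 9) + ((j : ℕ) : ZMod 9)) = BSP0 j := by decide

private lemma bsG1_0 : ∀ j : Fin 4, BSL1 ((3 : ZMod 9) - ((j : ℕ) : ZMod 9)) = BSQ0 j := by decide

private lemma bsF1_1 : ∀ j : Fin 4, BSL1 ((1 : ZMod 9) + ((j : ℕ) : ZMod 9)) = BSP1 j := by decide

private lemma bsG1_1 : ∀ j : Fin 4, BSL1 ((4 : ZMod 9) - ((j : ℕ) : ZMod 9)) = BSQ1 j := by decide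

private lemma bsF2_1 : ∀ j : Fin 4, BSL2 ((6 : ZMod 9) + ((j : ℕ) : ZMod 9)) = BSQ1 j := by decide

private lemma bsG2_1 : ∀ j : Fin 4, BSL2 ((0 : ZMod 9) - ((j : ℕ) : ZMod 9)) = BSP1 j := by decide

private lemma bsF2_2 : ∀ j : Fin 4, BSL2 ((5 : ZMod 9) + ((j : ℕ) : ZMod 9)) = BSP2 j := by decide

private lemma bsG2_2 : ∀ j : Fin 4, BSL2 ((8 : ZMod 9) - ((j : ℕ) : ZMod 9)) = BSQ2 j := by decide

private lemma bsF3_2 : ∀ j : Fin 4, BSL3 ((6 : ZMod 9) + ((j : ℕ) : ZMod 9)) = BSP2 j := by decide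

private lemma bsG3_2 : ∀ j : Fin 4, BSL3 ((0 : ZMod 9) - ((j : ℕ) : ZMod 9)) = BSQ2 j := by decide

private lemma bsF3_3 : ∀ j : Fin 4, BSL3 ((8 : ZMod 9) + ((j : ℕ) : ZMod 9)) = BSP3 j := by decide

private lemma bsG3_3 : ∀ j : Fin 4, BSL3 ((2 : ZMod 9) - ((j : ℕ) : ZMod 9)) = BSQ3 j := by decide

private lemma bsF4_3 : ∀ j : Fin 4, BSL4 ((8 : ZMod 9) + ((j : ℕ) : ZMod 9)) = BSP3 j := by decide

private lemma bsG4_3 : ∀ j : Fin 4, BSL4 ((2 : ZMod 9) - ((j : ℕ) : ZMod 9)) = BSQ3 j := by decide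

private lemma bsF4_4 : ∀ j : Fin 4, BSL4 ((6 : ZMod 9) + ((j : ℕ) : ZMod 9)) = BSQ4 j := by decide

private lemma bsG4_4 : ∀ j : Fin 4, BSL4 ((0 : ZMod 9) - ((j : ℕ) : ZMod 9)) = BSP4 j := by decide

private lemma bsF0_4 : ∀ j : Fin 4, BSL0 ((2 : ZMod 9) + ((j : ℕ) : ZMod 9)) = BSP4 j := by decide

private lemma bsG0_4 : ∀ j : Fin 4, BSL0 ((5 : ZMod 9) - ((j : ℕ) : ZMod 9)) = BSQ4 j := by decide

private lemma bsMem0_1 : ∃ j : ZMod 9, BSL1 j = ((5 : Fin 6), (1 : ZMod 17)) := ⟨4, by decide⟩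

private lemma bsNot0_1 : ∀ i : ZMod 9, BSL0 i ≠ ((5 : Fin 6), (1 : ZMod 17)) := by decide

private lemma bsMem1_2 : ∃ j : ZMod 9, BSL2 j = ((0 : Fin 6), (2 : ZMod 17)) := ⟨1, by decide⟩

private lemma bsNot1_2 : ∀ i : ZMod 9, BSL1 i ≠ ((0 : Fin 6), (2 : ZMod 17)) := by decide

private lemma bsMem2_3 : ∃ j : ZMod 9, BSL3 j = ((2 : Fin 6), (1 : ZMod 17)) := ⟨1, by decide⟩

private lemma bsNot2_3 : ∀ i : ZMod 9, BSL2 i ≠ ((2 : Fin 6), (1 : ZMod 17)) := by decide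

private lemma bsMem3_4 : ∃ j : ZMod 9, BSL4 j = ((3 : Fin 6), (1 : ZMod 17)) := ⟨7, by decide⟩

private lemma bsNot3_4 : ∀ i : ZMod 9, BSL3 i ≠ ((3 : Fin 6), (1 : ZMod 17)) := by decide

private lemma bsMem4_0 : ∃ j : ZMod 9, BSL0 j = ((0 : Fin 6), (0 : ZMod 17)) := ⟨0, by decide⟩

private lemma bsNot4_0 : ∀ i : ZMod 9, BSL4 i ≠ ((0 : Fin 6), (0 : ZMod 17)) := by decide


end BSAux

set_option maxHeartbeats 1000000 in
/-- The Biggs–Smith graph admits no coherent 9-cycle orientation of level 4. -/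
theorem biggsSmith_no_coherent_orientation :
    ¬ ∃ D : Set (ZMod 9 → Fin 6 × ZMod 17),
      IsCoherentOrientation biggsSmithGraph 9 4 D := by
  rintro ⟨D, hD, hRep, hCov⟩
  obtain ⟨c0, ⟨hc0D, hc0r⟩, -⟩ := hRep BSL0 bsCyc0
  obtain ⟨c1, ⟨hc1D, hc1r⟩, -⟩ := hRep BSL1 bsCyc1
  obtain ⟨c2, ⟨hc2D, hc2r⟩, -⟩ := hRep BSL2 bsCyc2
  obtain ⟨c3, ⟨hc3D, hc3r⟩, -⟩ := hRep BSL3 bsCyc3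
  obtain ⟨c4, ⟨hc4D, hc4r⟩, -⟩ := hRep BSL4 bsCyc4
  have U : ∀ v : Fin 4 → Fin 6 × ZMod 17, IsPathSeq biggsSmithGraph 4 v →
      ∀ c ∈ D, ∀ c' ∈ D, BSCov c v → BSCov c' v → c = c' := by
    intro v hv c hc c' hc' h h'
    obtain ⟨u, -, hu⟩ := hCov v hv
    rw [hu c ⟨hc, h⟩, hu c' ⟨hc', h'⟩]
  have ne01 : c0 ≠ c1 := bsNe hc0r hc1r bsMem0_1 bsNot0_1
  have ne12 : c1 ≠ c2 := bsNe hc1r hc2r bsMem1_2 bsNot1_2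
  have ne23 : c2 ≠ c3 := bsNe hc2r hc3r bsMem2_3 bsNot2_3
  have ne34 : c3 ≠ c4 := bsNe hc3r hc4r bsMem3_4 bsNot3_4
  have ne40 : c4 ≠ c0 := bsNe hc4r hc0r bsMem4_0 bsNot4_0
  have d0 : (BSCov c0 BSP0 ∧ BSCov c0 BSP4) ∨
      (BSCov c0 BSQ0 ∧ BSCov c0 BSQ4) := by
    rcases hc0r with ⟨r, hr⟩ | ⟨r, hr⟩
    · exact Or.inl ⟨bsCovA hr bsF0_0, bsCovA hr bsF0_4⟩
    · exact Or.inr ⟨bsCovB hr bsG0_0, bsCovB hr bsG0_4⟩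
  have d1 : (BSCov c1 BSP0 ∧ BSCov c1 BSP1) ∨
      (BSCov c1 BSQ0 ∧ BSCov c1 BSQ1) := by
    rcases hc1r with ⟨r, hr⟩ | ⟨r, hr⟩
    · exact Or.inl ⟨bsCovA hr bsF1_0, bsCovA hr bsF1_1⟩
    · exact Or.inr ⟨bsCovB hr bsG1_0, bsCovB hr bsG1_1⟩
  have d2 : (BSCov c2 BSQ1 ∧ BSCov c2 BSP2) ∨
      (BSCov c2 BSP1 ∧ BSCov c2 BSQ2) := by
    rcases hc2r with ⟨r, hr⟩ | ⟨r, hr⟩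
    · exact Or.inl ⟨bsCovA hr bsF2_1, bsCovA hr bsF2_2⟩
    · exact Or.inr ⟨bsCovB hr bsG2_1, bsCovB hr bsG2_2⟩
  have d3 : (BSCov c3 BSP2 ∧ BSCov c3 BSP3) ∨
      (BSCov c3 BSQ2 ∧ BSCov c3 BSQ3) := by
    rcases hc3r with ⟨r, hr⟩ | ⟨r, hr⟩
    · exact Or.inl ⟨bsCovA hr bsF3_2, bsCovA hr bsF3_3⟩
    · exact Or.inr ⟨bsCovB hr bsG3_2, bsCovB hr bsG3_3⟩
  have d4 : (BSCov c4 BSP3 ∧ BSCov c4 BSQ4) ∨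
      (BSCov c4 BSQ3 ∧ BSCov c4 BSP4) := by
    rcases hc4r with ⟨r, hr⟩ | ⟨r, hr⟩
    · exact Or.inl ⟨bsCovA hr bsF4_3, bsCovA hr bsF4_4⟩
    · exact Or.inr ⟨bsCovB hr bsG4_3, bsCovB hr bsG4_4⟩
  have nP0 : ¬ (BSCov c0 BSP0 ∧ BSCov c1 BSP0) := fun ⟨h1, h2⟩ =>
    ne01 (U BSP0 bsSeqP0 c0 hc0D c1 hc1D h1 h2)
  have nQ0 : ¬ (BSCov c0 BSQ0 ∧ BSCov c1 BSQ0) := fun ⟨h1, h2⟩ =>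
    ne01 (U BSQ0 bsSeqQ0 c0 hc0D c1 hc1D h1 h2)
  have nP1 : ¬ (BSCov c1 BSP1 ∧ BSCov c2 BSP1) := fun ⟨h1, h2⟩ =>
    ne12 (U BSP1 bsSeqP1 c1 hc1D c2 hc2D h1 h2)
  have nQ1 : ¬ (BSCov c1 BSQ1 ∧ BSCov c2 BSQ1) := fun ⟨h1, h2⟩ =>
    ne12 (U BSQ1 bsSeqQ1 c1 hc1D c2 hc2D h1 h2)
  have nP2 : ¬ (BSCov c2 BSP2 ∧ BSCov c3 BSP2) := fun ⟨h1, h2⟩ =>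
    ne23 (U BSP2 bsSeqP2 c2 hc2D c3 hc3D h1 h2)
  have nQ2 : ¬ (BSCov c2 BSQ2 ∧ BSCov c3 BSQ2) := fun ⟨h1, h2⟩ =>
    ne23 (U BSQ2 bsSeqQ2 c2 hc2D c3 hc3D h1 h2)
  have nP3 : ¬ (BSCov c3 BSP3 ∧ BSCov c4 BSP3) := fun ⟨h1, h2⟩ =>
    ne34 (U BSP3 bsSeqP3 c3 hc3D c4 hc4D h1 h2)
  have nQ3 : ¬ (BSCov c3 BSQ3 ∧ BSCov c4 BSQ3) := fun ⟨h1, h2⟩ =>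
    ne34 (U BSQ3 bsSeqQ3 c3 hc3D c4 hc4D h1 h2)
  have nP4 : ¬ (BSCov c4 BSP4 ∧ BSCov c0 BSP4) := fun ⟨h1, h2⟩ =>
    ne40 (U BSP4 bsSeqP4 c4 hc4D c0 hc0D h1 h2)
  have nQ4 : ¬ (BSCov c4 BSQ4 ∧ BSCov c0 BSQ4) := fun ⟨h1, h2⟩ =>
    ne40 (U BSQ4 bsSeqQ4 c4 hc4D c0 hc0D h1 h2)
  rcases d0 with ⟨h0a, h0b⟩ | ⟨h0a, h0b⟩ <;>
    rcases d1 with ⟨h1a, h1b⟩ | ⟨h1a, h1b⟩ <;>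
    rcases d2 with ⟨h2a, h2b⟩ | ⟨h2a, h2b⟩ <;>
    rcases d3 with ⟨h3a, h3b⟩ | ⟨h3a, h3b⟩ <;>
    rcases d4 with ⟨h4a, h4b⟩ | ⟨h4a, h4b⟩ <;>
    first
    | exact nP0 ⟨h0a, h1a⟩
    | exact nQ0 ⟨h0a, h1a⟩
    | exact nP1 ⟨h1b, h2a⟩
    | exact nQ1 ⟨h1b, h2a⟩
    | exact nP2 ⟨h2b, h3a⟩
    | exact nQ2 ⟨h2b, h3a⟩
    | exact nP3 ⟨h3b, h4a⟩
    | exact nQ3 ⟨h3b, h4a⟩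
    | exact nP4 ⟨h4b, h0b⟩
    | exact nQ4 ⟨h4b, h0b⟩
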